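/- arXiv:1311.6560 — 2 statements merged into one kernel-verified Lean document; each statement's English description precedes it below -/
import Mathlib

section
/- There is no poset P (with least element 0 and Z(P)^× ≠ ∅) for which the reduced zero-divisor graph Γ_E(P) is a cycle graph with at least four vertices; that is, for every n ≥ 4, Γ_E(P) is not isomorphic to the cycle graph C_n. -/
/-- `L(x,y) = {z : z ≤ x ∧ z ≤ y}`, where the least element `0` of the poset is `⊥`. -/
def LSet (P : Type*) [PartialOrder P] [OrderBot P] (x y : P) : Set P := {z | z ≤ x ∧ z ≤ y}

theorem LSet_comm (P : Type*) [PartialOrder P] [OrderBot P] (x y : P) :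
    LSet P x y = LSet P y x := by
  ext z; exact ⟨fun h => ⟨h.2, h.1⟩, fun h => ⟨h.2, h.1⟩⟩

/-- The annihilator of `x`: `ann(x) = {y : L(x,y) = {0}}`. -/
def ann (P : Type*) [PartialOrder P] [OrderBot P] (x : P) : Set P := {y | LSet P x y = {⊥}}

theorem mem_ann_comm (P : Type*) [PartialOrder P] [OrderBot P] (x y : P) :
    y ∈ ann P x ↔ x ∈ ann P y := by
  simp only [ann, Set.mem_setOf_eq, LSet_comm P x y]

/-- The set `Z(P)^× = Z(P) \ {0}` of nonzero zero-divisors of `P`. -/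
def ZDivX (P : Type*) [PartialOrder P] [OrderBot P] : Set P :=
  {x | x ≠ ⊥ ∧ ∃ y : P, y ≠ ⊥ ∧ LSet P x y = {⊥}}

/-- The zero-divisor graph `Γ(P)` on `Z(P)^×`. -/
def zdGraph (P : Type*) [PartialOrder P] [OrderBot P] : SimpleGraph (ZDivX P) where
  Adj a b := (a : P) ≠ (b : P) ∧ LSet P a b = {⊥}
  symm := by
    constructor
    rintro a b ⟨h1, h2⟩
    exact ⟨fun h => h1 h.symm, by rw [LSet_comm]; exact h2⟩
  loopless := by constructor; rintro a ⟨h1, _⟩; exact h1 rfl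

/-- The equivalence `x ∼ y ↔ ann(x) = ann(y)` on `Z(P)^×`. -/
def annSetoid (P : Type*) [PartialOrder P] [OrderBot P] : Setoid (ZDivX P) where
  r a b := ann P a = ann P b
  iseqv := ⟨fun _ => rfl, Eq.symm, Eq.trans⟩

/-- The reduced zero-divisor graph `Γ_E(P)`, on equivalence classes of `Z(P)^×`. -/
def redGraph (P : Type*) [PartialOrder P] [OrderBot P] :
    SimpleGraph (Quotient (annSetoid P)) where
  Adj := Quotient.lift₂ (fun a b => LSet P (a : P) (b : P) = {⊥}) (by
    intro a b a' b' ha hb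
    have ha' : ann P (a : P) = ann P (a' : P) := ha
    have hb' : ann P (b : P) = ann P (b' : P) := hb
    apply propext
    constructor
    · intro h
      have h1 : (b : P) ∈ ann P (a : P) := h
      rw [ha', mem_ann_comm, hb', mem_ann_comm] at h1
      exact h1
    · intro h
      have h1 : (b' : P) ∈ ann P (a' : P) := h
      rw [← ha', mem_ann_comm, ← hb', mem_ann_comm] at h1
      exact h1)
  symm := by
    constructor
    intro x y
    refine Quotient.inductionOn₂ x y ?_
    intro a b h
    have h' : LSet P (a : P) (b : P) = {⊥} := h
    show LSet P (b : P) (a : P) = {⊥}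
    rw [LSet_comm]; exact h'
  loopless := by
    constructor
    intro x
    refine Quotient.inductionOn x ?_
    intro a h
    have h' : LSet P (a : P) (a : P) = {⊥} := h
    have hm : (a : P) ∈ LSet P (a : P) (a : P) := ⟨le_refl _, le_refl _⟩
    rw [h'] at hm
    exact a.2.1 hm


/-! ### Auxiliary lemmas -/

section ModArith

lemma mod_char' {n : ℕ} (a : ℕ) (h : a < 2 * n) :
    a % n < n ∧ (a % n = a ∨ a % n + n = a) := by
  have hn : 0 < n := by omega
  refine ⟨Nat.mod_lt _ hn, ?_⟩
  rcases Nat.lt_or_ge a n with h' | h'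
  · exact Or.inl (Nat.mod_eq_of_lt h')
  · right
    rw [Nat.mod_eq_sub_mod h', Nat.mod_eq_of_lt (by omega)]
    omega

variable (m : ℕ)

lemma small_mods' : 0 % (m+4) = 0 ∧ 1 % (m+4) = 1 ∧ 2 % (m+4) = 2 ∧ 3 % (m+4) = 3 :=
  ⟨Nat.zero_mod _, Nat.mod_eq_of_lt (by omega), Nat.mod_eq_of_lt (by omega),
    Nat.mod_eq_of_lt (by omega)⟩

lemma cyc_adj01 : (SimpleGraph.cycleGraph (m+4)).Adj 0 1 := by
  rw [SimpleGraph.cycleGraph_adj']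
  obtain ⟨m0, m1, m2, m3⟩ := small_mods' m
  simp only [Fin.sub_def, Fin.coe_ofNat_eq_mod, Fin.val_zero, m0, m1, m2, m3]
  have a1 := mod_char' (n := m+4) (m + 4 - 1 + 0) (by omega)
  have a2 := mod_char' (n := m+4) (m + 4 - 0 + 1) (by omega)
  omega

lemma cyc_adj23 : (SimpleGraph.cycleGraph (m+4)).Adj 2 3 := by
  rw [SimpleGraph.cycleGraph_adj']
  obtain ⟨m0, m1, m2, m3⟩ := small_mods' m
  simp only [Fin.sub_def, Fin.coe_ofNat_eq_mod, Fin.val_zero, m0, m1, m2, m3]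
  have a1 := mod_char' (n := m+4) (m + 4 - 3 + 2) (by omega)
  have a2 := mod_char' (n := m+4) (m + 4 - 2 + 3) (by omega)
  omega

lemma cyc_adjlast : (SimpleGraph.cycleGraph (m+4)).Adj (0-1) 0 := by
  rw [SimpleGraph.cycleGraph_adj']
  obtain ⟨m0, m1, m2, m3⟩ := small_mods' m
  simp only [Fin.sub_def, Fin.coe_ofNat_eq_mod, Fin.val_zero, m0, m1, m2, m3]
  have i1 := mod_char' (n := m+4) (m + 4 - 1 + 0) (by omega)
  rcases i1.2 with hi | hi
  · rw [hi]
    have a1 := mod_char' (n := m+4) (m + 4 - 0 + (m + 4 - 1 + 0)) (by omega)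
    have a2 := mod_char' (n := m+4) (m + 4 - (m + 4 - 1 + 0) + 0) (by omega)
    omega
  · omega

lemma cyc_nadj02 : ¬ (SimpleGraph.cycleGraph (m+4)).Adj 0 2 := by
  rw [SimpleGraph.cycleGraph_adj']
  obtain ⟨m0, m1, m2, m3⟩ := small_mods' m
  simp only [Fin.sub_def, Fin.coe_ofNat_eq_mod, Fin.val_zero, m0, m1, m2, m3]
  have a1 := mod_char' (n := m+4) (m + 4 - 2 + 0) (by omega)
  have a2 := mod_char' (n := m+4) (m + 4 - 0 + 2) (by omega)
  omega

lemma cyc_key_arith (j : Fin (m+4)) (h1 : (SimpleGraph.cycleGraph (m+4)).Adj j 1)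
    (h3 : (SimpleGraph.cycleGraph (m+4)).Adj j 3)
    (hl : (SimpleGraph.cycleGraph (m+4)).Adj j (0-1)) :
    m = 0 ∧ ((j : ℕ) = 0 ∨ (j : ℕ) = 2) := by
  rw [SimpleGraph.cycleGraph_adj'] at h1 h3 hl
  obtain ⟨m0, m1, m2, m3⟩ := small_mods' m
  simp only [Fin.sub_def, Fin.coe_ofNat_eq_mod, Fin.val_zero, m0, m1, m2, m3] at h1 h3 hl
  have hj := j.isLt
  have i1 := mod_char' (n := m+4) (m + 4 - 1 + 0) (by omega)
  have hi : (m + 4 - 1 + 0) % (m+4) = m + 3 := by omega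
  rw [hi] at hl
  have a1 := mod_char' (n := m+4) (m + 4 - 1 + (j:ℕ)) (by omega)
  have a2 := mod_char' (n := m+4) (m + 4 - (j:ℕ) + 1) (by omega)
  have a3 := mod_char' (n := m+4) (m + 4 - 3 + (j:ℕ)) (by omega)
  have a4 := mod_char' (n := m+4) (m + 4 - (j:ℕ) + 3) (by omega)
  have a5 := mod_char' (n := m+4) (m + 4 - (m+3) + (j:ℕ)) (by omega)
  have a6 := mod_char' (n := m+4) (m + 4 - (j:ℕ) + (m+3)) (by omega)
  omega

end ModArith

section Helpers
variable {P : Type*} [PartialOrder P] [OrderBot P]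

lemma bot_mem_LSet (x y : P) : ⊥ ∈ LSet P x y := ⟨bot_le, bot_le⟩

lemma lset_eq_iff {x y : P} : LSet P x y = {⊥} ↔ ∀ z, z ≤ x → z ≤ y → z = ⊥ := by
  constructor
  · intro h z hx hy
    have : z ∈ LSet P x y := ⟨hx, hy⟩
    rwa [h, Set.mem_singleton_iff] at this
  · intro h
    exact Set.eq_singleton_iff_unique_mem.mpr
      ⟨bot_mem_LSet x y, fun z hz => h z hz.1 hz.2⟩

lemma lset_bot_of_le {z x y : P} (h : z ≤ x) (hxy : LSet P x y = {⊥}) :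
    LSet P z y = {⊥} := by
  rw [lset_eq_iff] at hxy ⊢
  exact fun w hwz hwy => hxy w (hwz.trans h) hwy

lemma ann_mono {z x : P} (h : z ≤ x) : ann P x ⊆ ann P z := fun y hy => by
  have hy' : LSet P x y = {⊥} := hy
  show LSet P z y = {⊥}
  exact lset_bot_of_le h hy'

lemma bot_mem_ann (x : P) : ⊥ ∈ ann P x := by
  show LSet P x ⊥ = {⊥}
  rw [lset_eq_iff]
  exact fun z _ hz => le_bot_iff.mp hz

lemma adj_iff {n : ℕ} (e : redGraph P ≃g SimpleGraph.cycleGraph n) (a b : ZDivX P) :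
    (SimpleGraph.cycleGraph n).Adj (e (Quotient.mk (annSetoid P) a))
      (e (Quotient.mk (annSetoid P) b)) ↔ LSet P (a : P) (b : P) = {⊥} := by
  rw [e.map_adj_iff]
  exact Iff.rfl

lemma aux4 {P : Type*} [PartialOrder P] [OrderBot P]
    (e : redGraph P ≃g SimpleGraph.cycleGraph 4)
    (x : Fin 4 → ZDivX P) (hx : ∀ i, Quotient.mk (annSetoid P) (x i) = e.symm i)
    (i : Fin 4) (z : ZDivX P)
    (hz0 : (z : P) ≤ (x i : P)) (hz2 : (z : P) ≤ (x (i + 2) : P))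
    (hj : e (Quotient.mk (annSetoid P) z) = i) : False := by
  have d1 : ∀ i : Fin 4, i ≠ i + 2 := by decide
  have d2 : ∀ i : Fin 4, (SimpleGraph.cycleGraph 4).Adj (i+1) (i+2) := by decide
  have d3 : ∀ i : Fin 4, (SimpleGraph.cycleGraph 4).Adj (i+3) (i+2) := by decide
  have hzi : Quotient.mk (annSetoid P) z = Quotient.mk (annSetoid P) (x i) := by
    rw [hx i, ← hj, e.symm_apply_apply]
  have hann : ann P (z : P) = ann P (x i : P) := Quotient.exact hzi
  have hsub : ann P (x (i+2) : P) ⊆ ann P (x i : P) := by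
    rw [← hann]; exact ann_mono hz2
  have hne : ann P (x i : P) ≠ ann P (x (i+2) : P) := by
    intro h
    have h2 : Quotient.mk (annSetoid P) (x i) = Quotient.mk (annSetoid P) (x (i+2)) :=
      Quotient.sound h
    rw [hx, hx] at h2
    exact d1 i (e.symm.injective h2)
  obtain ⟨t, ht1, ht2⟩ : ∃ t, t ∈ ann P (x i : P) ∧ t ∉ ann P (x (i+2) : P) := by
    by_contra hc
    push_neg at hc
    exact hne (Set.Subset.antisymm (fun t ht => hc t ht) hsub)
  have htbot : t ≠ ⊥ := fun h => ht2 (h ▸ bot_mem_ann _)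
  have htZ : t ∈ ZDivX P := ⟨htbot, x i, (x i).2.1, by rw [LSet_comm]; exact ht1⟩
  set t' : ZDivX P := ⟨t, htZ⟩ with ht'def
  have hadj : (SimpleGraph.cycleGraph 4).Adj (e (Quotient.mk (annSetoid P) t')) i := by
    have h := (adj_iff e t' (x i)).mpr (by rw [LSet_comm]; exact ht1)
    rwa [hx i, e.apply_symm_apply] at h
  have key : ∀ w : Fin 4, e (Quotient.mk (annSetoid P) t') = w →
      (SimpleGraph.cycleGraph 4).Adj w (i + 2) → False := by
    intro w hw hadj2
    have hclass : Quotient.mk (annSetoid P) t' = Quotient.mk (annSetoid P) (x w) := by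
      rw [hx w, ← hw, e.symm_apply_apply]
    have hann2 : ann P (t : P) = ann P (x w : P) := Quotient.exact hclass
    have hLw : LSet P (x w : P) (x (i+2) : P) = {⊥} := by
      rw [← adj_iff e, hx, hx, e.apply_symm_apply, e.apply_symm_apply]
      exact hadj2
    have hmem : (x (i+2) : P) ∈ ann P (t : P) := by rw [hann2]; exact hLw
    exact ht2 ((mem_ann_comm P _ _).mp hmem)
  have hk : e (Quotient.mk (annSetoid P) t') = i + 1 ∨
      e (Quotient.mk (annSetoid P) t') = i + 3 := by
    have h4 : ∀ k i : Fin 4, (SimpleGraph.cycleGraph 4).Adj k i → k = i + 1 ∨ k = i + 3 := by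
      decide
    exact h4 _ i hadj
  rcases hk with hk | hk
  · exact key _ hk (d2 i)
  · exact key _ hk (d3 i)

end Helpers

/-- There is no poset `P` for which `Γ_E(P)` is a cycle graph with at least four vertices. -/
theorem stmt4 (P : Type*) [PartialOrder P] [OrderBot P] (hZ : (ZDivX P).Nonempty)
    (n : ℕ) (hn : 4 ≤ n) :
    ¬ Nonempty (redGraph P ≃g SimpleGraph.cycleGraph n) := by
  rintro ⟨e⟩
  obtain ⟨m, rfl⟩ : ∃ m, n = m + 4 := ⟨n - 4, by omega⟩
  clear hn hZ
  set x : Fin (m+4) → ↥(ZDivX P) := fun i => Quotient.out (e.symm i) with hxdef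
  have hx : ∀ i : Fin (m+4), Quotient.mk (annSetoid P) (x i) = e.symm i :=
    fun i => Quotient.out_eq _
  have hL02 : LSet P (x 0 : P) (x 2 : P) ≠ {⊥} := by
    intro h
    have h2 := (adj_iff e (x 0) (x 2)).mpr h
    rw [hx, hx, e.apply_symm_apply, e.apply_symm_apply] at h2
    exact cyc_nadj02 m h2
  have hL01 : LSet P (x 0 : P) (x 1 : P) = {⊥} := by
    rw [← adj_iff e, hx, hx, e.apply_symm_apply, e.apply_symm_apply]
    exact cyc_adj01 m
  have hL23 : LSet P (x 2 : P) (x 3 : P) = {⊥} := by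
    rw [← adj_iff e, hx, hx, e.apply_symm_apply, e.apply_symm_apply]
    exact cyc_adj23 m
  have hLl : LSet P (x (0-1) : P) (x 0 : P) = {⊥} := by
    rw [← adj_iff e, hx, hx, e.apply_symm_apply, e.apply_symm_apply]
    exact cyc_adjlast m
  obtain ⟨z, hz0, hz2, hzbot⟩ : ∃ z : P, z ≤ (x 0 : P) ∧ z ≤ (x 2 : P) ∧ z ≠ ⊥ := by
    by_contra hc
    push_neg at hc
    exact hL02 (lset_eq_iff.mpr fun w h1 h2 => hc w h1 h2)
  have hzZ : z ∈ ZDivX P := ⟨hzbot, x 1, (x 1).2.1, lset_bot_of_le hz0 hL01⟩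
  set z' : ↥(ZDivX P) := ⟨z, hzZ⟩ with hz'def
  have hA1 : (SimpleGraph.cycleGraph (m+4)).Adj (e (Quotient.mk (annSetoid P) z')) 1 := by
    have h := (adj_iff e z' (x 1)).mpr (lset_bot_of_le hz0 hL01)
    rwa [hx, e.apply_symm_apply] at h
  have hA3 : (SimpleGraph.cycleGraph (m+4)).Adj (e (Quotient.mk (annSetoid P) z')) 3 := by
    have h := (adj_iff e z' (x 3)).mpr (lset_bot_of_le hz2 hL23)
    rwa [hx, e.apply_symm_apply] at h
  have hAl : (SimpleGraph.cycleGraph (m+4)).Adj (e (Quotient.mk (annSetoid P) z')) (0-1) := by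
    have hLl' : LSet P (x 0 : P) (x (0-1) : P) = {⊥} := by rw [LSet_comm]; exact hLl
    have h := (adj_iff e z' (x (0-1))).mpr (lset_bot_of_le hz0 hLl')
    rwa [hx, e.apply_symm_apply] at h
  obtain ⟨hm, hj⟩ := cyc_key_arith m _ hA1 hA3 hAl
  subst hm
  rcases hj with hj | hj
  · have hj0 : e (Quotient.mk (annSetoid P) z') = 0 := by
      apply Fin.ext; simpa using hj
    refine aux4 e x hx 0 z' hz0 ?_ hj0
    have h02 : (0 + 2 : Fin (0+4)) = 2 := by decide
    rw [h02]
    exact hz2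
  · have hj2 : e (Quotient.mk (annSetoid P) z') = 2 := by
      apply Fin.ext; simpa using hj
    refine aux4 e x hx 2 z' hz2 ?_ hj2
    have h22 : (2 + 2 : Fin (0+4)) = 0 := by decide
    rw [h22]
    exact hz0
end

section
/- Let P be a poset with least element 0 and Z(P)^× ≠ ∅. If P satisfies the ascending chain condition for annihilators, then for each x ∈ Z(P)^× there exists z ∈ P with ann(z) an annihilator prime ideal of P such that ann(x) ⊄ ann(z). -/
/-- `I` is an ideal of the poset `P`: a nonempty downward-closed subset. -/
def IsIdeal (P : Type*) [PartialOrder P] [OrderBot P] (I : Set P) : Prop :=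
  I.Nonempty ∧ ∀ x ∈ I, ∀ y : P, y ≤ x → y ∈ I

/-- `I` is a prime ideal of the poset `P`: a proper ideal such that
`L(x,y) ⊆ I` implies `x ∈ I` or `y ∈ I`. -/
def IsPrimeIdeal (P : Type*) [PartialOrder P] [OrderBot P] (I : Set P) : Prop :=
  IsIdeal P I ∧ I ≠ Set.univ ∧ ∀ x y : P, LSet P x y ⊆ I → x ∈ I ∨ y ∈ I

/-- The family `𝔄 = {ann(x) : x ∈ P \ {0}}`. -/
def AnnFam (P : Type*) [PartialOrder P] [OrderBot P] : Set (Set P) :=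
  {I | ∃ x : P, x ≠ ⊥ ∧ ann P x = I}

/-- `Ann(P)`, the set of annihilator prime ideals of `P`. -/
def AnnPrimes (P : Type*) [PartialOrder P] [OrderBot P] : Set (Set P) :=
  {I | IsPrimeIdeal P I ∧ ∃ x : P, ann P x = I}

/-- `P` satisfies the ACC for annihilators: every nonempty subfamily of `𝔄` has a
maximal element. -/
def ACCAnn (P : Type*) [PartialOrder P] [OrderBot P] : Prop :=
  ∀ S : Set (Set P), S ⊆ AnnFam P → S.Nonempty → ∃ I ∈ S, ∀ J ∈ S, I ⊆ J → I = J

theorem bot_mem_ann_s13 (P : Type*) [PartialOrder P] [OrderBot P] (z : P) : (⊥ : P) ∈ ann P z := by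
  show LSet P z ⊥ = {⊥}
  ext w
  constructor
  · rintro ⟨_, h2⟩; exact le_bot_iff.mp h2
  · rintro rfl; exact ⟨bot_le, le_rfl⟩

theorem not_mem_ann_self (P : Type*) [PartialOrder P] [OrderBot P] (z : P) (hz : z ≠ ⊥) :
    z ∉ ann P z := by
  intro h
  have : z ∈ LSet P z z := ⟨le_rfl, le_rfl⟩
  rw [show LSet P z z = {⊥} from h] at this
  exact hz this

theorem ann_down (P : Type*) [PartialOrder P] [OrderBot P] {z y y' : P} (h : y ∈ ann P z)
    (hle : y' ≤ y) : y' ∈ ann P z := by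
  show LSet P z y' = {⊥}
  apply Set.eq_singleton_iff_unique_mem.mpr
  refine ⟨⟨bot_le, bot_le⟩, fun w hw => ?_⟩
  have : w ∈ LSet P z y := ⟨hw.1, hw.2.trans hle⟩
  rw [show LSet P z y = {⊥} from h] at this
  exact this

/-- If `P` satisfies the ACC for annihilators, then for each `x ∈ Z(P)^×` there is an
annihilator prime ideal `ann(z)` with `ann(x) ⊄ ann(z)`. -/
theorem stmt13 (P : Type*) [PartialOrder P] [OrderBot P] (hZ : (ZDivX P).Nonempty)
    (hacc : ACCAnn P) (x : P) (hx : x ∈ ZDivX P) :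
    ∃ z : P, IsPrimeIdeal P (ann P z) ∧ ¬ ann P x ⊆ ann P z := by
  obtain ⟨hx0, y, hy0, hxy⟩ := hx
  set S : Set (Set P) := {I | ∃ w : P, w ≠ ⊥ ∧ x ∈ ann P w ∧ ann P w = I} with hS
  have hSsub : S ⊆ AnnFam P := by
    rintro I ⟨w, hw0, _, hwI⟩; exact ⟨w, hw0, hwI⟩
  have hSne : S.Nonempty := ⟨ann P y, y, hy0, (mem_ann_comm P x y).mp hxy, rfl⟩
  obtain ⟨I, ⟨z, hz0, hxz, rfl⟩, hmax⟩ := hacc S hSsub hSne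
  have hmax' : ∀ w : P, w ≠ ⊥ → ann P z ⊆ ann P w → ann P z = ann P w := by
    intro w hw0 hsub
    exact hmax (ann P w) ⟨w, hw0, hsub hxz, rfl⟩ hsub
  refine ⟨z, ⟨⟨⟨⊥, bot_mem_ann_s13 P z⟩, fun a ha b hb => ann_down P ha hb⟩, ?_, ?_⟩, ?_⟩
  · intro huniv
    exact not_mem_ann_self P z hz0 (huniv ▸ Set.mem_univ z)
  · intro a b hab
    by_contra hcon
    push_neg at hcon
    obtain ⟨ha, hb⟩ := hcon
    -- a ∉ ann z : there is w ≠ ⊥, w ≤ z, w ≤ a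
    have hne : LSet P z a ≠ {⊥} := ha
    obtain ⟨w, hwmem, hw0⟩ : ∃ w, w ∈ LSet P z a ∧ w ≠ ⊥ := by
      by_contra hc
      push_neg at hc
      apply hne
      apply Set.eq_singleton_iff_unique_mem.mpr
      exact ⟨⟨bot_le, bot_le⟩, fun u hu => hc u hu⟩
    obtain ⟨hwz, hwa⟩ := hwmem
    have hsub : ann P z ⊆ ann P w := by
      intro u hu
      show LSet P w u = {⊥}
      apply Set.eq_singleton_iff_unique_mem.mpr
      refine ⟨⟨bot_le, bot_le⟩, fun v hv => ?_⟩
      have : v ∈ LSet P z u := ⟨hv.1.trans hwz, hv.2⟩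
      rw [show LSet P z u = {⊥} from hu] at this
      exact this
    have heq : ann P z = ann P w := hmax' w hw0 hsub
    -- b ∈ ann w, contradiction
    apply hb
    rw [heq]
    show LSet P w b = {⊥}
    apply Set.eq_singleton_iff_unique_mem.mpr
    refine ⟨⟨bot_le, bot_le⟩, fun v hv => ?_⟩
    have hvann : v ∈ ann P z := hab ⟨hv.1.trans hwa, hv.2⟩
    rw [heq] at hvann
    have : v ∈ LSet P w v := ⟨hv.1, le_rfl⟩
    rw [show LSet P w v = {⊥} from hvann] at this
    exact this
  · intro hsub
    exact not_mem_ann_self P z hz0 (hsub ((mem_ann_comm P x z).mpr hxz))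
end
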